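/- Let f : ℝ → ℝ² be L-periodic and continuously differentiable. Then for any h > 0, ∫₀ᴸ sup_{λ ∈ [-h,h]} |f(t+λ) − f(t)| dt ≤ 2h · ∫₀ᴸ |f'(t)| dt. -/

import Mathlib

open MeasureTheory Set intervalIntegral

theorem stmt_2 (L : ℝ) (hL : 0 < L) (f : ℝ → EuclideanSpace ℝ (Fin 2))
    (hper : Function.Periodic f L) (hf : ContDiff ℝ 1 f) (h : ℝ) (hh : 0 < h) :
    (∫ t in (0:ℝ)..L, ⨆ lam : Set.Icc (-h) h, ‖f (t + (lam : ℝ)) - f t‖) ≤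
      2 * h * ∫ t in (0:ℝ)..L, ‖deriv f t‖ := by
  have hdf : Differentiable ℝ f := hf.differentiable one_ne_zero
  have hFc : Continuous fun s => ‖deriv f s‖ := (hf.continuous_deriv le_rfl).norm
  set F : ℝ → ℝ := fun s => ‖deriv f s‖ with hFdef
  have hFper : Function.Periodic F L := by
    intro x
    have : deriv (fun y => f (y + L)) x = deriv f (x + L) := deriv_comp_add_const f L x
    simp only [hFdef]
    rw [← this]
    congr 1
    congr 1
    funext y
    exact hper y
  have hFnn : ∀ s, 0 ≤ F s := fun s => norm_nonneg _
  -- pointwise bound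
  have key : ∀ t : ℝ, (⨆ lam : Set.Icc (-h) h, ‖f (t + (lam : ℝ)) - f t‖) ≤
      ∫ u in Ioc (-h) h, F (t + u) := by
    intro t
    have hIeq : (∫ u in Ioc (-h) h, F (t + u)) = ∫ s in Ioc (t - h) (t + h), F s := by
      rw [← intervalIntegral.integral_of_le (by linarith : -h ≤ h),
        ← intervalIntegral.integral_of_le (by linarith : t - h ≤ t + h)]
      simp_rw [add_comm t]
      rw [intervalIntegral.integral_comp_add_right]
      congr 1 <;> ring
    have hInt : IntegrableOn F (Ioc (t - h) (t + h)) := hFc.integrableOn_Ioc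
    haveI : Nonempty (Set.Icc (-h) h) := ⟨⟨0, by constructor <;> linarith⟩⟩
    apply ciSup_le
    rintro ⟨lam, hlam1, hlam2⟩
    have ftc : ∫ s in t..(t + lam), deriv f s = f (t + lam) - f t :=
      intervalIntegral.integral_deriv_eq_sub (fun x _ => hdf x)
        ((hf.continuous_deriv le_rfl).intervalIntegrable _ _)
    calc ‖f (t + lam) - f t‖ = ‖∫ s in t..(t + lam), deriv f s‖ := by rw [ftc]
      _ ≤ ∫ s in Set.uIoc t (t + lam), ‖deriv f s‖ :=
        intervalIntegral.norm_integral_le_integral_norm_uIoc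
      _ ≤ ∫ s in Ioc (t - h) (t + h), F s := by
        apply setIntegral_mono_set hInt
        · exact Filter.Eventually.of_forall fun s => hFnn s
        · apply Filter.Eventually.of_forall
          have : Set.uIoc t (t + lam) ⊆ Ioc (t - h) (t + h) :=
            Set.Ioc_subset_Ioc (le_min (by linarith) (by linarith))
              (max_le (by linarith) (by linarith))
          exact this
      _ = ∫ u in Ioc (-h) h, F (t + u) := hIeq.symm
  -- integrability of the double integral
  have hprodInt : Integrable (Function.uncurry fun t u => F (t + u))
      ((volume.restrict (Ioc (0:ℝ) L)).prod (volume.restrict (Ioc (-h) h))) := by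
    rw [Measure.prod_restrict, ← Measure.volume_eq_prod]
    have hc : Continuous (Function.uncurry fun t u => F (t + u)) :=
      hFc.comp (continuous_fst.add continuous_snd)
    have : IntegrableOn (Function.uncurry fun t u => F (t + u))
        (Icc (0:ℝ) L ×ˢ Icc (-h) h) :=
      hc.continuousOn.integrableOn_compact (isCompact_Icc.prod isCompact_Icc)
    exact this.mono_set (Set.prod_mono Ioc_subset_Icc_self Ioc_subset_Icc_self)
  -- main chain
  rw [intervalIntegral.integral_of_le hL.le]
  have step1 : (∫ t in Ioc (0:ℝ) L, ⨆ lam : Set.Icc (-h) h, ‖f (t + (lam : ℝ)) - f t‖)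
      ≤ ∫ t in Ioc (0:ℝ) L, ∫ u in Ioc (-h) h, F (t + u) := by
    apply integral_mono_of_nonneg
    · exact Filter.Eventually.of_forall fun t => Real.iSup_nonneg fun lam => norm_nonneg _
    · exact hprodInt.integral_prod_left
    · exact Filter.Eventually.of_forall key
  refine step1.trans ?_
  rw [integral_integral_swap hprodInt]
  have inner : ∀ u : ℝ, (∫ t in Ioc (0:ℝ) L, F (t + u)) = ∫ t in (0:ℝ)..L, F t := by
    intro u
    rw [← intervalIntegral.integral_of_le hL.le, intervalIntegral.integral_comp_add_right,
      zero_add]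
    have := hFper.intervalIntegral_add_eq u 0
    rw [zero_add] at this
    rw [← this]
    congr 1
    ring
  simp_rw [inner]
  rw [setIntegral_const, Real.volume_real_Ioc, smul_eq_mul]
  rw [max_eq_left (by linarith : (0:ℝ) ≤ h - -h)]
  have : h - -h = 2 * h := by ring
  rw [this]
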